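/- Let K be a field with char K = 2. Let H₂, H₃, H₄ ⊆ K* be sets such that every element of K* is ~₂-equivalent to exactly one element of H₂, ~₃-equivalent to exactly one element of H₃, and ~₄-equivalent to exactly one element of H₄. Consider the list of algebras: S(0,t,t,0,t,1) for t ∈ H₂; S(0,t,t,0,t,0) for t ∈ H₃; S(0,t,t,t,t,0) for t ∈ H₄; and S(0, t²/(1+t²), t/(1+t²), 1, t/(1+t²), 1) for t ∈ K* with t ≠ 1. Then: (1) every endo-commutative algebra S(0,q,a,b,c,d) over K with a ≠ 0 and c ≠ 0 is isomorphic to at least one algebra in this list; (2) any two algebras in the list with distinct parameter tuples (distinguishing the four families as well as distinct t) are non-isomorphic. -/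

import Mathlib

/-- Multiplication of the 2-dimensional algebra `S(p,q,a,b,c,d)` on `K × K`,
with basis `e = (1,0)`, `f = (0,1)` and table
`e*e = f`, `f*f = p•e + q•f`, `e*f = a•e + b•f`, `f*e = c•e + d•f`. -/
def mulS {K : Type*} [Field K] (p q a b c d : K) (u v : K × K) : K × K :=
  (u.1 * v.2 * a + u.2 * v.1 * c + u.2 * v.2 * p,
   u.1 * v.1 + u.1 * v.2 * b + u.2 * v.1 * d + u.2 * v.2 * q)

/-- `S(p,q,a,b,c,d)` is endo-commutative: `(x*x)*(y*y) = (x*y)*(x*y)`. -/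
def EndoComm {K : Type*} [Field K] (p q a b c d : K) : Prop :=
  ∀ u v : K × K,
    mulS p q a b c d (mulS p q a b c d u u) (mulS p q a b c d v v) =
      mulS p q a b c d (mulS p q a b c d u v) (mulS p q a b c d u v)

/-- `S(p,q,a,b,c,d)` and `S(p',q',a',b',c',d')` are isomorphic: there is a bijective
`K`-linear map between them preserving multiplication. -/
def IsoS {K : Type*} [Field K] (p q a b c d p' q' a' b' c' d' : K) : Prop :=
  ∃ φ : (K × K) ≃ₗ[K] (K × K),
    ∀ u v : K × K,
      φ (mulS p q a b c d u v) = mulS p' q' a' b' c' d' (φ u) (φ v)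

/-- `t ~₂ t'` iff `t + t' = x² + x` for some `x ∈ K`. -/
def rel2 {K : Type*} [Field K] (t t' : K) : Prop := ∃ x : K, t + t' = x ^ 2 + x

/-- `t ~₃ t'` iff there exist `x ∈ K*` and `y ∈ K` with `t'x² + y² + t = 0`. -/
def rel3 {K : Type*} [Field K] (t t' : K) : Prop :=
  ∃ x : K, x ≠ 0 ∧ ∃ y : K, t' * x ^ 2 + y ^ 2 + t = 0

/-- `t ~₄ t'` iff `1/t + 1/t' = x² + x` for some `x ∈ K`. -/
def rel4 {K : Type*} [Field K] (t t' : K) : Prop :=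
  ∃ x : K, 1 / t + 1 / t' = x ^ 2 + x

/-- The parameter tuples appearing in the classification list of
Theorem 7.4 (`char K = 2`). -/
def InList2 {K : Type*} [Field K] (H₂ H₃ H₄ : Set K) (p q a b c d : K) : Prop :=
  (∃ t ∈ H₂, (p, q, a, b, c, d) = ((0 : K), t, t, 0, t, 1)) ∨
  (∃ t ∈ H₃, (p, q, a, b, c, d) = ((0 : K), t, t, 0, t, 0)) ∨
  (∃ t ∈ H₄, (p, q, a, b, c, d) = ((0 : K), t, t, t, t, 0)) ∨
  (∃ t : K, t ≠ 0 ∧ t ≠ 1 ∧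
      (p, q, a, b, c, d) =
        ((0 : K), t ^ 2 / (1 + t ^ 2), t / (1 + t ^ 2), 1, t / (1 + t ^ 2), 1))


section Helpers

variable {K : Type*} [Field K]

lemma isoS_trans {p q a b c d p' q' a' b' c' d' p'' q'' a'' b'' c'' d'' : K}
    (h1 : IsoS p q a b c d p' q' a' b' c' d')
    (h2 : IsoS p' q' a' b' c' d' p'' q'' a'' b'' c'' d'') :
    IsoS p q a b c d p'' q'' a'' b'' c'' d'' := by
  obtain ⟨φ, hφ⟩ := h1
  obtain ⟨ψ, hψ⟩ := h2
  exact ⟨φ.trans ψ, fun u v => by simp [LinearEquiv.trans_apply, hφ, hψ]⟩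

variable [CharP K 2]

lemma iso_of_conditions (q₁ a₁ b₁ d₁ q₂ a₂ b₂ d₂ x z w : K) (hx : x ≠ 0) (hw : w ≠ 0)
    (hA : a₁ = a₂ * w) (hQ : q₁ = q₂ * w)
    (hE3 : w = x^2 + x*z*b₂ + x*z*d₂ + z^2*q₂)
    (hE4 : a₁*z + b₁*w = b₂*x*w + q₂*z*w)
    (hE4' : a₁*z + d₁*w = d₂*x*w + q₂*z*w) :
    IsoS 0 q₁ a₁ b₁ a₁ d₁ 0 q₂ a₂ b₂ a₂ d₂ := by
  have h2 : (2 : K) = 0 := by exact_mod_cast CharP.cast_eq_zero K 2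
  have hli : Function.LeftInverse (fun u : K × K => (u.1/x, u.2/w - z*u.1/(x*w)))
      (fun u : K × K => (x*u.1, z*u.1+w*u.2)) := by
    intro u; ext
    · dsimp; field_simp
    · dsimp; field_simp; ring
  have hri : Function.RightInverse (fun u : K × K => (u.1/x, u.2/w - z*u.1/(x*w)))
      (fun u : K × K => (x*u.1, z*u.1+w*u.2)) := by
    intro u; ext
    · dsimp; field_simp
    · dsimp; field_simp; ring
  refine ⟨{ toFun := fun u => (x*u.1, z*u.1+w*u.2),
            invFun := fun u => (u.1/x, u.2/w - z*u.1/(x*w)),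
            map_add' := by intro u v; ext <;> dsimp <;> ring
            map_smul' := by intro r u; ext <;> dsimp <;> ring
            left_inv := hli
            right_inv := hri }, ?_⟩
  intro u v
  simp only [mulS, LinearEquiv.coe_mk, LinearMap.coe_mk, AddHom.coe_mk, Prod.mk.injEq]
  constructor
  · linear_combination (x*(u.1*v.2 + u.2*v.1)) * hA - (a₂*x*z*u.1*v.1) * h2
  · linear_combination (u.1*v.1)*hE3 + (u.1*v.2)*hE4 + (u.2*v.1)*hE4' + (w*u.2*v.2)*hQ

lemma iso_conditions {q₁ a₁ b₁ d₁ q₂ a₂ b₂ d₂ : K}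
    (h : IsoS 0 q₁ a₁ b₁ a₁ d₁ 0 q₂ a₂ b₂ a₂ d₂) :
    ∃ x z w : K, x ≠ 0 ∧ w ≠ 0 ∧ a₁ = a₂ * w ∧ q₁ = q₂ * w ∧
      w = x^2 + x*z*b₂ + x*z*d₂ + z^2*q₂ ∧
      a₁*z + b₁*w = b₂*x*w + q₂*z*w ∧
      a₁*z + d₁*w = d₂*x*w + q₂*z*w := by
  have h2 : (2 : K) = 0 := by exact_mod_cast CharP.cast_eq_zero K 2
  obtain ⟨φ, hφ⟩ := h
  set x := (φ (1,0)).1 with hxdef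
  set z := (φ (1,0)).2 with hzdef
  have hlin : ∀ s t : K, φ (s, t) = (s*x + t*(φ (0,1)).1, s*z + t*(φ (0,1)).2) := by
    intro s t
    have : (s, t) = s • ((1:K),(0:K)) + t • ((0:K),(1:K)) := by
      simp [Prod.ext_iff]
    rw [this, map_add, map_smul, map_smul]
    simp [Prod.ext_iff, hxdef, hzdef]
  have hee := hφ (1,0) (1,0)
  simp only [mulS] at hee
  norm_num at hee
  have hf1 : (φ (0,1)).1 = 0 := by
    rw [hee]; dsimp; linear_combination (a₂*x*z)*h2
  set w := (φ (0,1)).2 with hwdef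
  have hwval : w = x^2 + x*z*b₂ + x*z*d₂ + z^2*q₂ := by
    rw [hwdef, hee]; dsimp; ring
  have hw : w ≠ 0 := by
    intro h0
    have hz0 : (φ (0,1)).2 = 0 := by rw [← hwdef]; exact h0
    have heq : φ (0,1) = 0 := by
      have hrep : φ (0,1) = ((φ (0,1)).1, (φ (0,1)).2) := rfl
      rw [hrep, hf1, hz0]; rfl
    have : ((0:K),(1:K)) = (0 : K × K) := by
      simpa using φ.injective (by simpa using heq : φ (0,1) = φ 0)
    simp [Prod.ext_iff] at this
  have hx : x ≠ 0 := by
    intro h0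
    obtain ⟨u, hu⟩ := φ.surjective (1,0)
    have : φ u = (u.1*x + u.2*(φ (0,1)).1, u.1*z + u.2*w) := by
      rw [← hlin u.1 u.2]
    rw [hu] at this
    rw [hf1, h0] at this
    simp [Prod.ext_iff] at this
  have hef := hφ (1,0) (0,1)
  simp only [mulS] at hef
  norm_num at hef
  rw [hlin a₁ b₁] at hef
  have hef1 := congrArg Prod.fst hef
  have hef2 := congrArg Prod.snd hef
  dsimp at hef1 hef2
  rw [hf1] at hef1 hef2
  have hfe := hφ (0,1) (1,0)
  simp only [mulS] at hfe
  norm_num at hfe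
  rw [hlin a₁ d₁] at hfe
  have hfe2 := congrArg Prod.snd hfe
  dsimp at hfe2
  rw [hf1] at hfe2
  have hff := hφ (0,1) (0,1)
  simp only [mulS] at hff
  norm_num at hff
  rw [hlin 0 q₁] at hff
  have hff2 := congrArg Prod.snd hff
  dsimp at hff2
  rw [hf1] at hff2
  refine ⟨x, z, w, hx, hw, ?_, ?_, hwval, ?_, ?_⟩
  · have : a₁ * x = a₂ * w * x := by linear_combination hef1
    exact mul_right_cancel₀ hx this
  · have : q₁ * w = q₂ * w * w := by linear_combination hff2
    exact mul_right_cancel₀ hw this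
  · linear_combination hef2
  · linear_combination hfe2

lemma EC_struct {q a b c d : K} (ha : a ≠ 0)
    (hEC : EndoComm 0 q a b c d) :
    c = a ∧ ((b = d ∧ a^2 = q^2 + q*b^2 ∧ q ≠ 0) ∨ (b ≠ d ∧ q = a ∧ (b = 0 ∨ d = 0))) := by
  have h2 : (2 : K) = 0 := by exact_mod_cast CharP.cast_eq_zero K 2
  have hA0 := congrArg Prod.fst (hEC (1,1) (1,0))
  have hB0 := congrArg Prod.fst (hEC (0,1) (1,0))
  have hA1 := congrArg Prod.snd (hEC (1,1) (1,0))
  have hB1 := congrArg Prod.snd (hEC (0,1) (1,0))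
  have hC1 := congrArg Prod.snd (hEC (1,0) (0,1))
  simp only [mulS] at hA0 hB0 hA1 hB1 hC1
  norm_num at hA0 hB0 hA1 hB1 hC1
  have hca : c = a := by
    have h : (c - a)^2 = 0 := by
      linear_combination hB0 - hA0 + (a^2 - a*c)*h2
    have := pow_eq_zero_iff (two_ne_zero) |>.mp h
    exact sub_eq_zero.mp this
  refine ⟨hca, ?_⟩
  rw [hca] at hA1 hB1
  by_cases hbd : b = d
  · subst hbd
    have hT4 : a^2 = q^2 + q*b^2 := by
      linear_combination -hC1 + (-(q*b^2) - a*b^2)*h2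
    refine Or.inl ⟨rfl, hT4, ?_⟩
    intro hq0
    subst hq0
    have : a^2 = 0 := by linear_combination hT4
    exact ha (pow_eq_zero_iff two_ne_zero |>.mp this)
  · have hT2 : (a - q)*(b - d) = 0 := by
      linear_combination hA1 - hB1 + (q*d - q*b)*h2
    have hq : q = a := by
      rcases mul_eq_zero.mp hT2 with h | h
      · exact (sub_eq_zero.mp h).symm
      · exact absurd (sub_eq_zero.mp h) hbd
    rw [hq] at hB1
    have hT3 : a*b*d = 0 := by
      linear_combination -hB1 + (-(a*d^2))*h2
    refine Or.inr ⟨hbd, hq, ?_⟩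
    rcases mul_eq_zero.mp hT3 with h | h
    · rcases mul_eq_zero.mp h with h' | h'
      · exact absurd h' ha
      · exact Or.inl h'
    · exact Or.inr h

lemma char2_two_eq_zero : (2 : K) = 0 := by exact_mod_cast CharP.cast_eq_zero K 2

lemma one_add_sq_ne_zero {t : K} (ht1 : t ≠ 1) : 1 + t^2 ≠ 0 := by
  have h2 : (2 : K) = 0 := char2_two_eq_zero
  intro h
  apply ht1
  have hsq : (t - 1)^2 = 0 := by linear_combination h - t*h2
  have := pow_eq_zero_iff two_ne_zero |>.mp hsq
  exact sub_eq_zero.mp this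

lemma rel2_refl (t : K) : rel2 t t :=
  ⟨0, by simp [CharTwo.add_self_eq_zero]⟩

lemma rel3_refl (t : K) : rel3 t t :=
  ⟨1, one_ne_zero, 0, by linear_combination t * (char2_two_eq_zero (K := K))⟩

lemma rel4_refl (t : K) : rel4 t t :=
  ⟨0, by simp [CharTwo.add_self_eq_zero]⟩

lemma iso_I_of_rel2 {t s : K} (ht : t ≠ 0) (hs : s ≠ 0) (h : rel2 t s) :
    IsoS 0 t t 0 t 1 0 s s 0 s 1 := by
  have h2 : (2 : K) = 0 := char2_two_eq_zero
  obtain ⟨X, hX⟩ := h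
  have hts : t = X^2 + X + s := by linear_combination hX - s*h2
  refine iso_of_conditions t t 0 1 s s 0 1 1 (X/s) (t/s) one_ne_zero
    (div_ne_zero ht hs) (by field_simp) (by field_simp) ?_ ?_ ?_
  · rw [hts]; field_simp; ring
  · field_simp; ring
  · field_simp; ring

lemma iso_II_of_rel3 {t s : K} (ht : t ≠ 0) (hs : s ≠ 0) (h : rel3 t s) :
    IsoS 0 t t 0 t 0 0 s s 0 s 0 := by
  have h2 : (2 : K) = 0 := char2_two_eq_zero
  obtain ⟨X, hX0, Y, hXY⟩ := h
  have hts : t = s*X^2 + Y^2 := by linear_combination -hXY + t*h2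
  refine iso_of_conditions t t 0 0 s s 0 0 X (Y/s) (t/s) hX0
    (div_ne_zero ht hs) (by field_simp) (by field_simp) ?_ ?_ ?_
  · rw [hts]; field_simp; ring
  · field_simp; ring
  · field_simp; ring

lemma iso_III_of_rel4 {t s : K} (ht : t ≠ 0) (hs : s ≠ 0) (h : rel4 t s) :
    IsoS 0 t t t t 0 0 s s s s 0 := by
  have h2 : (2 : K) = 0 := char2_two_eq_zero
  obtain ⟨X, hX⟩ := h
  have key : s + t = s*t*X^2 + s*t*X := by
    field_simp at hX
    linear_combination hX
  refine iso_of_conditions t t t 0 s s s 0 (t/s) (X*t/s) (t/s)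
    (div_ne_zero ht hs) (div_ne_zero ht hs) (by field_simp) (by field_simp) ?_ ?_ ?_
  · field_simp
    linear_combination key - t*h2
  · field_simp; ring
  · field_simp; ring

lemma ratio_of_iso {q₁ a₁ b₁ d₁ q₂ a₂ b₂ d₂ : K}
    (h : IsoS 0 q₁ a₁ b₁ a₁ d₁ 0 q₂ a₂ b₂ a₂ d₂) : a₁ * q₂ = a₂ * q₁ := by
  obtain ⟨x, z, w, hx, hw, hA, hQ, _, _, _⟩ := iso_conditions h
  linear_combination q₂*hA - a₂*hQ

lemma rel2_of_iso_I {t s : K} (ht : t ≠ 0) (hs : s ≠ 0)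
    (h : IsoS 0 t t 0 t 1 0 s s 0 s 1) : rel2 t s := by
  have h2 : (2 : K) = 0 := char2_two_eq_zero
  obtain ⟨x, z, w, hx, hw, hA, hQ, hE3, hE4, hE4'⟩ := iso_conditions h
  have hxw : x * w = w := by linear_combination z*hA - hE4'
  have hx1 : x = 1 := by
    have := mul_right_cancel₀ hw (hxw.trans (one_mul w).symm)
    exact this
  exact ⟨z*s, by linear_combination hA + s*hE3 + (s*(x+1)+s*z)*hx1 + s*h2⟩

lemma rel3_of_iso_II {t s : K} (ht : t ≠ 0) (hs : s ≠ 0)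
    (h : IsoS 0 t t 0 t 0 0 s s 0 s 0) : rel3 t s := by
  have h2 : (2 : K) = 0 := char2_two_eq_zero
  obtain ⟨x, z, w, hx, hw, hA, hQ, hE3, hE4, hE4'⟩ := iso_conditions h
  exact ⟨x, hx, z*s, by linear_combination hA + s*hE3 + (s*x^2 + s^2*z^2)*h2⟩

lemma rel4_of_iso_III {t s : K} (ht : t ≠ 0) (hs : s ≠ 0)
    (h : IsoS 0 t t t t 0 0 s s s s 0) : rel4 t s := by
  have h2 : (2 : K) = 0 := char2_two_eq_zero
  obtain ⟨x, z, w, hx, hw, hA, hQ, hE3, hE4, hE4'⟩ := iso_conditions h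
  have hsxw : s*x*w = t*w := by linear_combination z*hA - hE4
  have hsx : s*x = t := mul_right_cancel₀ hw hsxw
  have hwx : w = x := mul_left_cancel₀ hs (by linear_combination -hA - hsx)
  rw [hwx] at hE3
  refine ⟨z*s/t, ?_⟩
  rw [← hsx]
  field_simp
  linear_combination hE3 + x^2*h2

lemma not_iso_I_II {t s : K} (ht : t ≠ 0) (hs : s ≠ 0) :
    ¬ IsoS 0 t t 0 t 1 0 s s 0 s 0 := by
  intro h
  obtain ⟨x, z, w, hx, hw, hA, hQ, hE3, hE4, hE4'⟩ := iso_conditions h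
  exact hw (by linear_combination hE4' - hE4)

lemma not_iso_II_I {t s : K} (ht : t ≠ 0) (hs : s ≠ 0) :
    ¬ IsoS 0 t t 0 t 0 0 s s 0 s 1 := by
  intro h
  obtain ⟨x, z, w, hx, hw, hA, hQ, hE3, hE4, hE4'⟩ := iso_conditions h
  have : x*w = 0 := by linear_combination hE4 - hE4'
  rcases mul_eq_zero.mp this with h' | h'
  · exact hx h'
  · exact hw h'

lemma not_iso_I_III {t s : K} (ht : t ≠ 0) (hs : s ≠ 0) :
    ¬ IsoS 0 t t 0 t 1 0 s s s s 0 := by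
  intro h
  obtain ⟨x, z, w, hx, hw, hA, hQ, hE3, hE4, hE4'⟩ := iso_conditions h
  exact hw (by linear_combination hE4' - z*hA)

lemma not_iso_III_I {t s : K} (ht : t ≠ 0) (hs : s ≠ 0) :
    ¬ IsoS 0 t t t t 0 0 s s 0 s 1 := by
  intro h
  obtain ⟨x, z, w, hx, hw, hA, hQ, hE3, hE4, hE4'⟩ := iso_conditions h
  have : t*w = 0 := by linear_combination hE4 - z*hA
  rcases mul_eq_zero.mp this with h' | h'
  · exact ht h'
  · exact hw h'

lemma not_iso_II_III {t s : K} (ht : t ≠ 0) (hs : s ≠ 0) :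
    ¬ IsoS 0 t t 0 t 0 0 s s s s 0 := by
  intro h
  obtain ⟨x, z, w, hx, hw, hA, hQ, hE3, hE4, hE4'⟩ := iso_conditions h
  have : s*(x*w) = 0 := by linear_combination z*hA - hE4
  rcases mul_eq_zero.mp this with h' | h'
  · exact hs h'
  · rcases mul_eq_zero.mp h' with h'' | h''
    · exact hx h''
    · exact hw h''

lemma not_iso_III_II {t s : K} (ht : t ≠ 0) (hs : s ≠ 0) :
    ¬ IsoS 0 t t t t 0 0 s s 0 s 0 := by
  intro h
  obtain ⟨x, z, w, hx, hw, hA, hQ, hE3, hE4, hE4'⟩ := iso_conditions h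
  have : t*w = 0 := by linear_combination hE4 - z*hA
  rcases mul_eq_zero.mp this with h' | h'
  · exact ht h'
  · exact hw h'

end Helpers

theorem classification_II1_char_two {K : Type*} [Field K] [CharP K 2]
    (H₂ H₃ H₄ : Set K)
    (hH₂0 : ∀ s ∈ H₂, s ≠ 0) (hH₃0 : ∀ s ∈ H₃, s ≠ 0) (hH₄0 : ∀ s ∈ H₄, s ≠ 0)
    (hH₂ : ∀ t : K, t ≠ 0 → ∃! s, s ∈ H₂ ∧ rel2 t s)
    (hH₃ : ∀ t : K, t ≠ 0 → ∃! s, s ∈ H₃ ∧ rel3 t s)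
    (hH₄ : ∀ t : K, t ≠ 0 → ∃! s, s ∈ H₄ ∧ rel4 t s) :
    (∀ q a b c d : K, a ≠ 0 → c ≠ 0 → EndoComm 0 q a b c d →
        ∃ p' q' a' b' c' d' : K, InList2 H₂ H₃ H₄ p' q' a' b' c' d' ∧
          IsoS 0 q a b c d p' q' a' b' c' d') ∧
    (∀ p₁ q₁ a₁ b₁ c₁ d₁ p₂ q₂ a₂ b₂ c₂ d₂ : K,
        InList2 H₂ H₃ H₄ p₁ q₁ a₁ b₁ c₁ d₁ → InList2 H₂ H₃ H₄ p₂ q₂ a₂ b₂ c₂ d₂ →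
        (p₁, q₁, a₁, b₁, c₁, d₁) ≠ (p₂, q₂, a₂, b₂, c₂, d₂) →
        ¬ IsoS p₁ q₁ a₁ b₁ c₁ d₁ p₂ q₂ a₂ b₂ c₂ d₂) := by
  have h2 : (2 : K) = 0 := char2_two_eq_zero
  constructor
  · -- existence
    intro q a b c d ha hc hEC
    obtain ⟨hca, hcase⟩ := EC_struct ha hEC
    rw [hca]
    rcases hcase with ⟨hbd, hrel, hq0⟩ | ⟨hbd, hqa, hb0d0⟩
    · -- commutative case: b = d, a² = q² + qb²
      rw [← hbd]
      by_cases hb : b = 0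
      · subst hb
        have haq : a = q := by
          have hsq : (a - q)^2 = 0 := by linear_combination hrel + (q^2 - a*q)*h2
          exact sub_eq_zero.mp (pow_eq_zero_iff two_ne_zero |>.mp hsq)
        obtain ⟨sH, ⟨hsH, hsrel⟩, _⟩ := hH₃ a ha
        refine ⟨0, sH, sH, 0, sH, 0, Or.inr (Or.inl ⟨sH, hsH, rfl⟩), ?_⟩
        rw [← haq]
        exact iso_II_of_rel3 ha (hH₃0 sH hsH) hsrel
      · -- family IV
        have hne : q ≠ a := by
          intro hq
          apply hb
          have hb2 : q * b^2 = 0 := by linear_combination -hrel - (q+a)*hq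
          rcases mul_eq_zero.mp hb2 with h' | h'
          · exact absurd h' hq0
          · exact pow_eq_zero_iff two_ne_zero |>.mp h'
        have ht0 : q/a ≠ 0 := div_ne_zero hq0 ha
        have ht1 : q/a ≠ 1 := by
          intro h
          exact hne ((div_eq_one_iff_eq ha).mp h)
        have h1t : 1 + (q/a)^2 ≠ 0 := one_add_sq_ne_zero ht1
        refine ⟨0, (q/a)^2/(1+(q/a)^2), (q/a)/(1+(q/a)^2), 1, (q/a)/(1+(q/a)^2), 1,
          Or.inr (Or.inr (Or.inr ⟨q/a, ht0, ht1, rfl⟩)), ?_⟩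
        have hq2a2 : q^2 + a^2 = q*b^2 := by linear_combination hrel + q^2*h2
        refine iso_of_conditions q a b b _ _ 1 1 b 0 (b^2) hb (pow_ne_zero 2 hb)
          ?_ ?_ (by ring) (by ring) (by ring)
        · have key : (q/a)/(1+(q/a)^2) = a/b^2 := by
            rw [div_eq_div_iff (one_add_sq_ne_zero ht1) (pow_ne_zero 2 hb)]
            field_simp
            linear_combination -hq2a2
          rw [key]
          field_simp
        · have key : (q/a)^2/(1+(q/a)^2) = q/b^2 := by
            rw [div_eq_div_iff (one_add_sq_ne_zero ht1) (pow_ne_zero 2 hb)]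
            field_simp
            linear_combination -hq2a2
          rw [key]
          field_simp
    · -- non-commutative case: q = a, b*d = 0
      rw [hqa]
      rcases hb0d0 with hb | hd
      · subst hb
        have hd0 : d ≠ 0 := Ne.symm hbd
        have ht0 : a/d^2 ≠ 0 := div_ne_zero ha (pow_ne_zero 2 hd0)
        obtain ⟨sH, ⟨hsH, hsrel⟩, _⟩ := hH₂ (a/d^2) ht0
        refine ⟨0, sH, sH, 0, sH, 1, Or.inl ⟨sH, hsH, rfl⟩, ?_⟩
        refine isoS_trans ?_ (iso_I_of_rel2 ht0 (hH₂0 sH hsH) hsrel)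
        refine iso_of_conditions a a 0 d (a/d^2) (a/d^2) 0 1 d 0 (d^2) hd0 (pow_ne_zero 2 hd0)
          (by field_simp) (by field_simp) (by ring) (by ring) (by ring)
      · subst hd
        have hb0 : b ≠ 0 := hbd
        have ht0 : b^2/a ≠ 0 := div_ne_zero (pow_ne_zero 2 hb0) ha
        obtain ⟨sH, ⟨hsH, hsrel⟩, _⟩ := hH₄ (b^2/a) ht0
        refine ⟨0, sH, sH, sH, sH, 0, Or.inr (Or.inr (Or.inl ⟨sH, hsH, rfl⟩)), ?_⟩
        refine isoS_trans ?_ (iso_III_of_rel4 ht0 (hH₄0 sH hsH) hsrel)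
        refine iso_of_conditions a a b 0 (b^2/a) (b^2/a) (b^2/a) 0 (a/b) 0 (a^2/b^2)
          (div_ne_zero ha hb0) (div_ne_zero (pow_ne_zero 2 ha) (pow_ne_zero 2 hb0))
          ?_ ?_ ?_ ?_ ?_ <;> (try ring) <;> (field_simp; try ring)
  · -- uniqueness
    intro p₁ q₁ a₁ b₁ c₁ d₁ p₂ q₂ a₂ b₂ c₂ d₂ hIn1 hIn2 hne hiso
    rcases hIn1 with ⟨t, htH, heq1⟩ | ⟨t, htH, heq1⟩ | ⟨t, htH, heq1⟩ | ⟨t, ht0, ht1, heq1⟩ <;>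
      rcases hIn2 with ⟨s, hsH, heq2⟩ | ⟨s, hsH, heq2⟩ | ⟨s, hsH, heq2⟩ | ⟨s, hs0, hs1, heq2⟩ <;>
      (simp only [Prod.mk.injEq] at heq1 heq2
       obtain ⟨e1, e2, e3, e4, e5, e6⟩ := heq1
       obtain ⟨f1, f2, f3, f4, f5, f6⟩ := heq2
       rw [e1, e2, e3, e4, e5, e6, f1, f2, f3, f4, f5, f6] at hiso hne)
    · -- I vs I
      have hrel := rel2_of_iso_I (hH₂0 t htH) (hH₂0 s hsH) hiso
      obtain ⟨u, _, huniq⟩ := hH₂ t (hH₂0 t htH)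
      have h1u := huniq t ⟨htH, rel2_refl t⟩
      have h2u := huniq s ⟨hsH, hrel⟩
      exact hne (by rw [h1u.trans h2u.symm])
    · exact not_iso_I_II (hH₂0 t htH) (hH₃0 s hsH) hiso
    · exact not_iso_I_III (hH₂0 t htH) (hH₄0 s hsH) hiso
    · -- I vs IV
      have hr := ratio_of_iso hiso
      have h1s := one_add_sq_ne_zero hs1
      apply hs1
      field_simp at hr
      have hss : t*(s*(s-1)) = 0 := by linear_combination s*hr
      rcases mul_eq_zero.mp hss with h' | h'
      · exact absurd h' (hH₂0 t htH)
      · rcases mul_eq_zero.mp h' with h'' | h''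
        · exact absurd h'' hs0
        · exact sub_eq_zero.mp h''
    · exact not_iso_II_I (hH₃0 t htH) (hH₂0 s hsH) hiso
    · -- II vs II
      have hrel := rel3_of_iso_II (hH₃0 t htH) (hH₃0 s hsH) hiso
      obtain ⟨u, _, huniq⟩ := hH₃ t (hH₃0 t htH)
      have h1u := huniq t ⟨htH, rel3_refl t⟩
      have h2u := huniq s ⟨hsH, hrel⟩
      exact hne (by rw [h1u.trans h2u.symm])
    · exact not_iso_II_III (hH₃0 t htH) (hH₄0 s hsH) hiso
    · -- II vs IV
      have hr := ratio_of_iso hiso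
      have h1s := one_add_sq_ne_zero hs1
      apply hs1
      field_simp at hr
      have hss : t*(s*(s-1)) = 0 := by linear_combination s*hr
      rcases mul_eq_zero.mp hss with h' | h'
      · exact absurd h' (hH₃0 t htH)
      · rcases mul_eq_zero.mp h' with h'' | h''
        · exact absurd h'' hs0
        · exact sub_eq_zero.mp h''
    · exact not_iso_III_I (hH₄0 t htH) (hH₂0 s hsH) hiso
    · exact not_iso_III_II (hH₄0 t htH) (hH₃0 s hsH) hiso
    · -- III vs III
      have hrel := rel4_of_iso_III (hH₄0 t htH) (hH₄0 s hsH) hiso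
      obtain ⟨u, _, huniq⟩ := hH₄ t (hH₄0 t htH)
      have h1u := huniq t ⟨htH, rel4_refl t⟩
      have h2u := huniq s ⟨hsH, hrel⟩
      exact hne (by rw [h1u.trans h2u.symm])
    · -- III vs IV
      have hr := ratio_of_iso hiso
      have h1s := one_add_sq_ne_zero hs1
      apply hs1
      field_simp at hr
      have hss : t*(s*(s-1)) = 0 := by linear_combination s*hr
      rcases mul_eq_zero.mp hss with h' | h'
      · exact absurd h' (hH₄0 t htH)
      · rcases mul_eq_zero.mp h' with h'' | h''
        · exact absurd h'' hs0
        · exact sub_eq_zero.mp h''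
    · -- IV vs I
      have hr := ratio_of_iso hiso
      have h1t := one_add_sq_ne_zero ht1
      apply ht1
      field_simp at hr
      have hss : s*(t*(t-1)) = 0 := by linear_combination (-t)*hr
      rcases mul_eq_zero.mp hss with h' | h'
      · exact absurd h' (hH₂0 s hsH)
      · rcases mul_eq_zero.mp h' with h'' | h''
        · exact absurd h'' ht0
        · exact sub_eq_zero.mp h''
    · -- IV vs II
      have hr := ratio_of_iso hiso
      have h1t := one_add_sq_ne_zero ht1
      apply ht1
      field_simp at hr
      have hss : s*(t*(t-1)) = 0 := by linear_combination (-t)*hr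
      rcases mul_eq_zero.mp hss with h' | h'
      · exact absurd h' (hH₃0 s hsH)
      · rcases mul_eq_zero.mp h' with h'' | h''
        · exact absurd h'' ht0
        · exact sub_eq_zero.mp h''
    · -- IV vs III
      have hr := ratio_of_iso hiso
      have h1t := one_add_sq_ne_zero ht1
      apply ht1
      field_simp at hr
      have hss : s*(t*(t-1)) = 0 := by linear_combination (-t)*hr
      rcases mul_eq_zero.mp hss with h' | h'
      · exact absurd h' (hH₄0 s hsH)
      · rcases mul_eq_zero.mp h' with h'' | h''
        · exact absurd h'' ht0
        · exact sub_eq_zero.mp h''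
    · -- IV vs IV
      have hr := ratio_of_iso hiso
      have h1t := one_add_sq_ne_zero ht1
      have h1s := one_add_sq_ne_zero hs1
      have hts : t = s := by
        field_simp at hr
        have hr2 : t*s^2*((1+s^2)*(1+t^2)) = s*t^2*((1+s^2)*(1+t^2)) := by
          linear_combination (s*t*((1+s^2)*(1+t^2)))*hr
        have hr3 := mul_right_cancel₀ (mul_ne_zero h1s h1t) hr2
        have hss : t*(s*(s-t)) = 0 := by linear_combination hr3
        rcases mul_eq_zero.mp hss with h' | h'
        · exact absurd h' ht0
        · rcases mul_eq_zero.mp h' with h'' | h''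
          · exact absurd h'' hs0
          · exact (sub_eq_zero.mp h'').symm
      exact hne (by rw [hts])
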